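/- arXiv:2505.12947 — 2 statements merged into one kernel-verified Lean document; each statement's English description precedes it below -/
import Mathlib

section
/- The S-unit equation u + v = 1 with u, v ∈ ℤ[1/S]× for S = {2,3} has exactly 21 solutions (u,v). -/
lemma pow_mod_cycle {a m k : ℕ} (hm : 1 < m) (h : a ^ k % m = 1) (n : ℕ) :
    a ^ n % m = a ^ (n % k) % m := by
  have e : a ^ n = (a ^ k) ^ (n / k) * a ^ (n % k) := by
    rw [← pow_mul, ← pow_add, Nat.div_add_mod]
  rw [e, Nat.mul_mod, Nat.pow_mod, h, one_pow, Nat.one_mod_eq_one.mpr (by omega), one_mul,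
    Nat.mod_mod_of_dvd _ dvd_rfl]

lemma pow2_inj {m k : ℕ} (h : (2:ℕ) ^ m = 2 ^ k) : m = k :=
  Nat.pow_right_injective (by norm_num) h

/-- `3^n + 1 = 2^m` only for `(0,1)` and `(1,2)`. -/
lemma three_pow_succ_eq_two_pow {n m : ℕ} (h : 3 ^ n + 1 = 2 ^ m) :
    (n = 0 ∧ m = 1) ∨ (n = 1 ∧ m = 2) := by
  match n with
  | 0 => exact Or.inl ⟨rfl, (pow2_inj (m := m) (k := 1) (by omega))⟩
  | 1 => exact Or.inr ⟨rfl, (pow2_inj (m := m) (k := 2) (by omega))⟩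
  | (k+2) =>
    exfalso
    have h9 : 9 ≤ 3 ^ (k+2) := by
      calc (9:ℕ) = 3 ^ 2 := by norm_num
      _ ≤ 3 ^ (k+2) := Nat.pow_le_pow_right (by norm_num) (by omega)
    have hm4 : 4 ≤ m := by
      by_contra hc
      interval_cases m <;> omega
    have hdvd : (8:ℕ) ∣ 2 ^ m := by
      calc (8:ℕ) = 2 ^ 3 := by norm_num
      _ ∣ 2 ^ m := pow_dvd_pow 2 (by omega)
    have e8 : 3 ^ (k+2) % 8 = 3 ^ ((k+2) % 2) % 8 := pow_mod_cycle (by norm_num) (by norm_num) _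
    have hr : (k+2) % 2 < 2 := Nat.mod_lt _ (by norm_num)
    interval_cases hh : (k+2) % 2 <;> simp at e8 <;> omega

/-- `2^m + 1 = 3^n` only for `(1,1)` and `(3,2)`. -/
lemma two_pow_succ_eq_three_pow {m n : ℕ} (h : 2 ^ m + 1 = 3 ^ n) :
    (m = 1 ∧ n = 1) ∨ (m = 3 ∧ n = 2) := by
  rcases Nat.lt_or_ge m 4 with hm | hm
  · have hn : n < 3 := by
      by_contra hc
      have : (3:ℕ)^3 ≤ 3 ^ n := Nat.pow_le_pow_right (by norm_num) (by omega)
      interval_cases m <;> omega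
    interval_cases m <;> interval_cases n <;> omega
  · exfalso
    have hdvd : (16:ℕ) ∣ 2 ^ m := by
      calc (16:ℕ) = 2 ^ 4 := by norm_num
      _ ∣ 2 ^ m := pow_dvd_pow 2 hm
    have e16 : 3 ^ n % 16 = 3 ^ (n % 4) % 16 := pow_mod_cycle (by norm_num) (by norm_num) n
    have e5 : 3 ^ n % 5 = 3 ^ (n % 4) % 5 := pow_mod_cycle (by norm_num) (by norm_num) n
    have h5 : ¬ ((5:ℕ) ∣ 2 ^ m) := by
      intro hd
      have := Nat.Prime.dvd_of_dvd_pow (p := 5) (by norm_num) hd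
      omega
    have hr : n % 4 < 4 := Nat.mod_lt _ (by norm_num)
    interval_cases hh : n % 4 <;> simp at e16 e5 <;> omega

def Sm23 (n : ℕ) : Prop := ∃ a b : ℕ, n = 2 ^ a * 3 ^ b

lemma Sm23.pos {n : ℕ} (h : Sm23 n) : 0 < n := by
  obtain ⟨a, b, rfl⟩ := h; positivity

lemma Sm23.prime_le {n : ℕ} (h : Sm23 n) {p : ℕ} (hp : p.Prime) (hd : p ∣ n) :
    p = 2 ∨ p = 3 := by
  obtain ⟨a, b, rfl⟩ := h
  rcases (Nat.Prime.dvd_mul hp).mp hd with h' | h'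
  · exact Or.inl ((Nat.prime_dvd_prime_iff_eq hp Nat.prime_two).mp (hp.dvd_of_dvd_pow h'))
  · exact Or.inr ((Nat.prime_dvd_prime_iff_eq hp Nat.prime_three).mp (hp.dvd_of_dvd_pow h'))

lemma smooth_of_primes : ∀ n : ℕ, n ≠ 0 → (∀ p : ℕ, p.Prime → p ∣ n → p = 2 ∨ p = 3) →
    Sm23 n := by
  intro n
  induction n using Nat.strong_induction_on with
  | _ n ih =>
    intro hn h
    rcases eq_or_ne n 1 with rfl | h1
    · exact ⟨0, 0, rfl⟩
    have hp := Nat.minFac_prime h1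
    have hd := Nat.minFac_dvd n
    have hlt : n / n.minFac < n := Nat.div_lt_self (Nat.pos_of_ne_zero hn) hp.one_lt
    have hne : n / n.minFac ≠ 0 := by
      intro h0
      have := Nat.eq_mul_of_div_eq_right hd h0
      omega
    obtain ⟨a, b, hab⟩ := ih _ hlt hne
      (fun p pp pd => h p pp (pd.trans (Nat.div_dvd_of_dvd hd)))
    have hn2 : n = n.minFac * (n / n.minFac) := (Nat.mul_div_cancel' hd).symm
    rcases h _ hp hd with h2 | h3
    · exact ⟨a + 1, b, by rw [hn2, hab, h2]; ring⟩
    · exact ⟨a, b + 1, by rw [hn2, hab, h3]; ring⟩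

lemma Sm23.of_dvd {m n : ℕ} (h : Sm23 n) (hd : m ∣ n) : Sm23 m := by
  have hn := h.pos
  refine smooth_of_primes m (fun h0 => by subst h0; exact absurd (Nat.eq_zero_of_zero_dvd hd) (by omega)) ?_
  · exact fun p pp pd => h.prime_le pp (pd.trans hd)

/-- `1 + y = z` with `y, z` 3-smooth forces `y ∈ {1,2,3,8}`. -/
lemma core1 {y : ℕ} (hsy : Sm23 y) (hsz : Sm23 (1 + y)) : y = 1 ∨ y = 2 ∨ y = 3 ∨ y = 8 := by
  obtain ⟨c, d, hy⟩ := hsy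
  obtain ⟨e, f, hz⟩ := hsz
  have hypos : 0 < y := by rw [hy]; positivity
  rcases Nat.eq_zero_or_pos c with hc | hc
  · rcases Nat.eq_zero_or_pos d with hd | hd
    · left; rw [hy, hc, hd]; norm_num
    · -- y = 3^d, d > 0
      have hy' : y = 3 ^ d := by rw [hy, hc, pow_zero, one_mul]
      have h3y : (3:ℕ) ∣ y := hy' ▸ dvd_pow_self 3 (by omega)
      have hf : f = 0 := by
        by_contra hf
        have h3z : (3:ℕ) ∣ 1 + y := by
          rw [hz]; exact Dvd.dvd.mul_left (dvd_pow_self 3 hf) _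
        omega
      have h1 : 3 ^ d + 1 = 2 ^ e := by
        have hz' : 1 + y = 2 ^ e := by rw [hz, hf, pow_zero, mul_one]
        omega
      rcases three_pow_succ_eq_two_pow h1 with ⟨hd0, _⟩ | ⟨hd1, _⟩
      · omega
      · right; right; left; rw [hy', hd1, pow_one]
  · -- c > 0 : y even
    have h2y : (2:ℕ) ∣ y := by
      rw [hy]; exact Dvd.dvd.mul_right (dvd_pow_self 2 (by omega)) _
    have he : e = 0 := by
      by_contra he
      have h2z : (2:ℕ) ∣ 1 + y := by
        rw [hz]; exact Dvd.dvd.mul_right (dvd_pow_self 2 he) _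
      omega
    have hzf : 1 + y = 3 ^ f := by rw [hz, he, pow_zero, one_mul]
    have hfpos : f ≠ 0 := by
      intro hf0
      rw [hf0, pow_zero] at hzf
      omega
    have hd : d = 0 := by
      by_contra hd
      have h3y : (3:ℕ) ∣ y := by
        rw [hy]; exact Dvd.dvd.mul_left (dvd_pow_self 3 hd) _
      have h3z : (3:ℕ) ∣ 1 + y := hzf ▸ dvd_pow_self 3 hfpos
      omega
    have hy' : y = 2 ^ c := by rw [hy, hd, pow_zero, mul_one]
    have h1 : 2 ^ c + 1 = 3 ^ f := by omega
    rcases two_pow_succ_eq_three_pow h1 with ⟨hc1, _⟩ | ⟨hc3, _⟩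
    · right; left; rw [hy', hc1, pow_one]
    · right; right; right; rw [hy', hc3]; norm_num

/-- The coprime 3-smooth solutions of `x + y = z`. -/
lemma core {x y : ℕ} (hco : Nat.Coprime x y) (hsx : Sm23 x) (hsy : Sm23 y)
    (hsz : Sm23 (x + y)) :
    (x = 1 ∧ y = 1) ∨ (x = 1 ∧ y = 2) ∨ (x = 2 ∧ y = 1) ∨ (x = 1 ∧ y = 3) ∨
      (x = 3 ∧ y = 1) ∨ (x = 1 ∧ y = 8) ∨ (x = 8 ∧ y = 1) := by
  have hx := hsx.pos
  have hy := hsy.pos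
  have key : x = 1 ∨ y = 1 := by
    by_contra hcon
    push_neg at hcon
    obtain ⟨hx1, hy1⟩ := hcon
    have c2 : ¬ ((2:ℕ) ∣ x ∧ (2:ℕ) ∣ y) := by
      rintro ⟨h1, h2⟩
      have := Nat.dvd_gcd h1 h2
      rw [hco] at this
      omega
    have c3 : ¬ ((3:ℕ) ∣ x ∧ (3:ℕ) ∣ y) := by
      rintro ⟨h1, h2⟩
      have := Nat.dvd_gcd h1 h2
      rw [hco] at this
      omega
    have hpx := Nat.minFac_prime hx1
    have hpy := Nat.minFac_prime hy1
    have hzne : x + y ≠ 1 := by omega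
    have hpz := Nat.minFac_prime hzne
    have hdx := Nat.minFac_dvd x
    have hdy := Nat.minFac_dvd y
    have hdz := Nat.minFac_dvd (x + y)
    rcases hsx.prime_le hpx hdx with ex | ex <;> rw [ex] at hdx <;>
      rcases hsy.prime_le hpy hdy with ey | ey <;> rw [ey] at hdy <;>
        rcases hsz.prime_le hpz hdz with ez | ez <;> rw [ez] at hdz <;> omega
  rcases key with rfl | rfl
  · rcases core1 hsy hsz with h | h | h | h <;> omega
  · have hsz' : Sm23 (1 + x) := by rwa [add_comm] at hsz
    rcases core1 hsx hsz' with h | h | h | h <;> omega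

/-- `u` is a unit of `ℤ[1/S]` for `S = {2,3}`, i.e. a rational of the form `±2^a·3^b`. -/
def IsS23Unit (u : ℚ) : Prop := ∃ a b : ℤ, u = 2 ^ a * 3 ^ b ∨ u = -(2 ^ a * 3 ^ b)

lemma zpow_split (t : ℚ) (ht : t ≠ 0) (a : ℤ) :
    t ^ a * t ^ ((-a).toNat) = t ^ (a.toNat) := by
  rw [← zpow_natCast t (-a).toNat, ← zpow_natCast t a.toNat, ← zpow_add₀ ht]
  congr 1
  omega

lemma IsS23Unit.ne_zero {u : ℚ} (h : IsS23Unit u) : u ≠ 0 := by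
  obtain ⟨a, b, h | h⟩ := h <;> rw [h]
  · positivity
  · have : (0:ℚ) < 2 ^ a * 3 ^ b := by positivity
    intro hc
    rw [neg_eq_zero] at hc
    exact this.ne' hc

lemma IsS23Unit.smooth {u : ℚ} (h : IsS23Unit u) :
    Sm23 u.num.natAbs ∧ Sm23 u.den := by
  obtain ⟨a, b, hu⟩ := h
  set M : ℤ := ((2 ^ a.toNat * 3 ^ b.toNat : ℕ) : ℤ) with hM
  set N : ℤ := ((2 ^ (-a).toNat * 3 ^ (-b).toNat : ℕ) : ℤ) with hN
  have hN0 : N ≠ 0 := by rw [hN]; positivity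
  have h2 := zpow_split 2 two_ne_zero a
  have h3 := zpow_split 3 three_ne_zero b
  have hkey : (2:ℚ) ^ a * 3 ^ b * (N : ℚ) = (M : ℚ) := by
    rw [hM, hN]
    push_cast
    calc (2:ℚ) ^ a * 3 ^ b * (2 ^ (-a).toNat * 3 ^ (-b).toNat)
        = (2 ^ a * 2 ^ (-a).toNat) * (3 ^ b * 3 ^ (-b).toNat) := by ring
      _ = 2 ^ a.toNat * 3 ^ b.toNat := by rw [h2, h3]
  have habs : u.num.natAbs ∣ (2 ^ a.toNat * 3 ^ b.toNat : ℕ) ∧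
      (u.den : ℤ) ∣ N := by
    rcases hu with hu | hu
    · have hud : u = Rat.divInt M N := by
        rw [Rat.divInt_eq_div, eq_div_iff (by exact_mod_cast hN0), hu, hkey]
      constructor
        
      · have := Rat.num_dvd M hN0
        rw [← hud] at this
        have h2 := Int.natAbs_dvd_natAbs.mpr this
        rwa [hM, Int.natAbs_natCast] at h2
      · have := Rat.den_dvd M N
        rwa [← hud] at this
    · have hud : u = Rat.divInt (-M) N := by
        rw [Rat.divInt_eq_div, eq_div_iff (by exact_mod_cast hN0), hu]
        push_cast
        rw [neg_mul, hkey]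
      constructor
      · have := Rat.num_dvd (-M) hN0
        rw [← hud] at this
        have h2 := Int.natAbs_dvd_natAbs.mpr this
        rwa [Int.natAbs_neg, hM, Int.natAbs_natCast] at h2
      · have := Rat.den_dvd (-M) N
        rwa [← hud] at this
  constructor
  · exact Sm23.of_dvd ⟨a.toNat, b.toNat, rfl⟩ habs.1
  · have : u.den ∣ (2 ^ (-a).toNat * 3 ^ (-b).toNat : ℕ) := by
      have h2 := Int.natAbs_dvd_natAbs.mpr habs.2
      rwa [Int.natAbs_natCast, hN, Int.natAbs_natCast] at h2
    exact Sm23.of_dvd ⟨(-a).toNat, (-b).toNat, rfl⟩ this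
lemma den_sum {u v : ℚ} (huv : u + v = 1) :
    v.den = u.den ∧ u.num + v.num = (u.den : ℤ) := by
  have hud : ((u.den:ℤ):ℚ) ≠ 0 := by exact_mod_cast (Nat.cast_ne_zero (R := ℚ)).mpr u.den_nz
  have hvd : ((v.den:ℤ):ℚ) ≠ 0 := by exact_mod_cast (Nat.cast_ne_zero (R := ℚ)).mpr v.den_nz
  have h1 : (u.num:ℚ)/((u.den:ℤ):ℚ) + (v.num:ℚ)/((v.den:ℤ):ℚ) = 1 := by
    push_cast
    rw [Rat.num_div_den, Rat.num_div_den]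
    exact huv
  rw [div_add_div _ _ hud hvd, div_eq_one_iff_eq (mul_ne_zero hud hvd)] at h1
  have key : u.num * (v.den:ℤ) + (u.den:ℤ) * v.num = (u.den:ℤ) * v.den := by
    exact_mod_cast h1
  have hcu : Int.gcd u.num (u.den:ℤ) = 1 := u.reduced
  have hcv : Int.gcd v.num (v.den:ℤ) = 1 := v.reduced
  have hdvd1 : (u.den:ℤ) ∣ (v.den:ℤ) := by
    have h2 : (u.den:ℤ) ∣ u.num * (v.den:ℤ) := ⟨v.den - v.num, by linarith [key]⟩
    exact Int.dvd_of_dvd_mul_right_of_gcd_one h2 (by rw [Int.gcd_comm]; exact hcu)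
  have hdvd2 : (v.den:ℤ) ∣ (u.den:ℤ) := by
    have h2 : (v.den:ℤ) ∣ v.num * (u.den:ℤ) := ⟨u.den - u.num, by linarith [key]⟩
    exact Int.dvd_of_dvd_mul_right_of_gcd_one h2 (by rw [Int.gcd_comm]; exact hcv)
  have hden : v.den = u.den := by
    have := Int.dvd_antisymm (by positivity) (by positivity) hdvd2 hdvd1
    exact_mod_cast this
  refine ⟨hden, ?_⟩
  rw [hden] at key
  have h3 : (u.num + v.num) * (u.den:ℤ) = (u.den:ℤ) * (u.den:ℤ) := by linarith [key]
  have hne : (u.den:ℤ) ≠ 0 := by exact_mod_cast u.den_nz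
  exact mul_right_cancel₀ hne h3

set_option maxHeartbeats 2000000 in
lemma classify {u v : ℚ} (hu : IsS23Unit u) (hv : IsS23Unit v) (huv : u + v = 1) :
    v.den = u.den ∧
    ((u.num = 1 ∧ u.den = 2 ∧ v.num = 1) ∨
     (u.num = 1 ∧ u.den = 3 ∧ v.num = 2) ∨
     (u.num = 2 ∧ u.den = 3 ∧ v.num = 1) ∨
     (u.num = 1 ∧ u.den = 4 ∧ v.num = 3) ∨
     (u.num = 3 ∧ u.den = 4 ∧ v.num = 1) ∨
     (u.num = 1 ∧ u.den = 9 ∧ v.num = 8) ∨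
     (u.num = 8 ∧ u.den = 9 ∧ v.num = 1) ∨
     (u.num = -1 ∧ u.den = 1 ∧ v.num = 2) ∨
     (u.num = -2 ∧ u.den = 1 ∧ v.num = 3) ∨
     (u.num = -1 ∧ u.den = 2 ∧ v.num = 3) ∨
     (u.num = -3 ∧ u.den = 1 ∧ v.num = 4) ∨
     (u.num = -1 ∧ u.den = 3 ∧ v.num = 4) ∨
     (u.num = -8 ∧ u.den = 1 ∧ v.num = 9) ∨
     (u.num = -1 ∧ u.den = 8 ∧ v.num = 9) ∨
     (u.num = 2 ∧ u.den = 1 ∧ v.num = -1) ∨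
     (u.num = 3 ∧ u.den = 1 ∧ v.num = -2) ∨
     (u.num = 3 ∧ u.den = 2 ∧ v.num = -1) ∨
     (u.num = 4 ∧ u.den = 1 ∧ v.num = -3) ∨
     (u.num = 4 ∧ u.den = 3 ∧ v.num = -1) ∨
     (u.num = 9 ∧ u.den = 1 ∧ v.num = -8) ∨
     (u.num = 9 ∧ u.den = 8 ∧ v.num = -1)) := by
  obtain ⟨hden, hsum⟩ := den_sum huv
  refine ⟨hden, ?_⟩
  have hun : u.num ≠ 0 := Rat.num_ne_zero.mpr hu.ne_zero
  have hvn : v.num ≠ 0 := Rat.num_ne_zero.mpr hv.ne_zero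
  have hsu := hu.smooth
  have hsv := hv.smooth
  have hdpos : 0 < u.den := u.pos
  have hg : Int.gcd u.num v.num = 1 := by
    have hd1 : (Int.gcd u.num v.num : ℤ) ∣ u.num := Int.gcd_dvd_left _ _
    have hd2 : (Int.gcd u.num v.num : ℤ) ∣ v.num := Int.gcd_dvd_right _ _
    have h1 : (Int.gcd u.num v.num : ℤ) ∣ (Int.gcd u.num u.den : ℤ) := by
      refine Int.dvd_coe_gcd hd1 ?_
      have := dvd_add hd1 hd2
      rwa [hsum] at this
    have hred : (Int.gcd u.num u.den : ℤ) = ((1:ℕ):ℤ) := by exact_mod_cast (u.reduced : Nat.Coprime _ _)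
    rw [hred] at h1
    exact Nat.dvd_one.mp (by exact_mod_cast h1)
  rcases lt_trichotomy u.num 0 with hult | h0 | hugt
  · rcases lt_trichotomy v.num 0 with hvlt | h0 | hvgt
    · omega
    · exact absurd h0 hvn
    · -- u.num < 0 < v.num
      have hco1 : Nat.Coprime u.num.natAbs u.den := u.reduced
      have hco : Nat.Coprime u.den u.num.natAbs := hco1.symm
      have hxy : u.den + u.num.natAbs = v.num.natAbs := by omega
      have hz : Sm23 (u.den + u.num.natAbs) := by rw [hxy]; exact hsv.1
      rcases core hco hsu.2 hsu.1 hz with ⟨h1,h2⟩|⟨h1,h2⟩|⟨h1,h2⟩|⟨h1,h2⟩|⟨h1,h2⟩|⟨h1,h2⟩|⟨h1,h2⟩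
      · right; right; right; right; right; right; right; left; exact ⟨by omega, by omega, by omega⟩
      · right; right; right; right; right; right; right; right; left; exact ⟨by omega, by omega, by omega⟩
      · right; right; right; right; right; right; right; right; right; left; exact ⟨by omega, by omega, by omega⟩
      · right; right; right; right; right; right; right; right; right; right; left; exact ⟨by omega, by omega, by omega⟩
      · right; right; right; right; right; right; right; right; right; right; right; left; exact ⟨by omega, by omega, by omega⟩
      · right; right; right; right; right; right; right; right; right; right; right; right; left; exact ⟨by omega, by omega, by omega⟩
      · right; right; right; right; right; right; right; right; right; right; right; right; right; left; exact ⟨by omega, by omega, by omega⟩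
  · exact absurd h0 hun
  · rcases lt_trichotomy v.num 0 with hvlt | h0 | hvgt
    · -- v.num < 0 < u.num
      have hco1 : Nat.Coprime v.num.natAbs v.den := v.reduced
      have hco : Nat.Coprime v.den v.num.natAbs := hco1.symm
      have hxy : v.den + v.num.natAbs = u.num.natAbs := by omega
      have hz : Sm23 (v.den + v.num.natAbs) := by rw [hxy]; exact hsu.1
      rcases core hco hsv.2 hsv.1 hz with ⟨h1,h2⟩|⟨h1,h2⟩|⟨h1,h2⟩|⟨h1,h2⟩|⟨h1,h2⟩|⟨h1,h2⟩|⟨h1,h2⟩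
      · right; right; right; right; right; right; right; right; right; right; right; right; right; right; left; exact ⟨by omega, by omega, by omega⟩
      · right; right; right; right; right; right; right; right; right; right; right; right; right; right; right; left; exact ⟨by omega, by omega, by omega⟩
      · right; right; right; right; right; right; right; right; right; right; right; right; right; right; right; right; left; exact ⟨by omega, by omega, by omega⟩
      · right; right; right; right; right; right; right; right; right; right; right; right; right; right; right; right; right; left; exact ⟨by omega, by omega, by omega⟩
      · right; right; right; right; right; right; right; right; right; right; right; right; right; right; right; right; right; right; left; exact ⟨by omega, by omega, by omega⟩
      · right; right; right; right; right; right; right; right; right; right; right; right; right; right; right; right; right; right; right; left; exact ⟨by omega, by omega, by omega⟩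
      · right; right; right; right; right; right; right; right; right; right; right; right; right; right; right; right; right; right; right; right; exact ⟨by omega, by omega, by omega⟩
    · exact absurd h0 hvn
    · -- both positive
      have hco : Nat.Coprime u.num.natAbs v.num.natAbs := hg
      have hxy : u.num.natAbs + v.num.natAbs = u.den := by omega
      have hz : Sm23 (u.num.natAbs + v.num.natAbs) := by rw [hxy]; exact hsu.2
      rcases core hco hsu.1 hsv.1 hz with ⟨h1,h2⟩|⟨h1,h2⟩|⟨h1,h2⟩|⟨h1,h2⟩|⟨h1,h2⟩|⟨h1,h2⟩|⟨h1,h2⟩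
      · left; exact ⟨by omega, by omega, by omega⟩
      · right; left; exact ⟨by omega, by omega, by omega⟩
      · right; right; left; exact ⟨by omega, by omega, by omega⟩
      · right; right; right; left; exact ⟨by omega, by omega, by omega⟩
      · right; right; right; right; left; exact ⟨by omega, by omega, by omega⟩
      · right; right; right; right; right; left; exact ⟨by omega, by omega, by omega⟩
      · right; right; right; right; right; right; left; exact ⟨by omega, by omega, by omega⟩

def r23 (n : ℤ) (d : ℕ) (h1 : d ≠ 0 := by decide) (h2 : n.natAbs.Coprime d := by decide) : ℚ :=
  Rat.mk' n d h1 h2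

lemma r23_eq (n : ℤ) (d : ℕ) (h1 : d ≠ 0) (h2 : n.natAbs.Coprime d) :
    r23 n d h1 h2 = (n : ℚ) / (d : ℚ) := by
  rw [r23, Rat.mk_eq_divInt, Rat.divInt_eq_div]
  norm_cast

def L21 : Finset (ℚ × ℚ) := {(r23 1 2, r23 1 2),
  (r23 1 3, r23 2 3),
  (r23 2 3, r23 1 3),
  (r23 1 4, r23 3 4),
  (r23 3 4, r23 1 4),
  (r23 1 9, r23 8 9),
  (r23 8 9, r23 1 9),
  (r23 (-1) 1, r23 2 1),
  (r23 (-2) 1, r23 3 1),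
  (r23 (-1) 2, r23 3 2),
  (r23 (-3) 1, r23 4 1),
  (r23 (-1) 3, r23 4 3),
  (r23 (-8) 1, r23 9 1),
  (r23 (-1) 8, r23 9 8),
  (r23 2 1, r23 (-1) 1),
  (r23 3 1, r23 (-2) 1),
  (r23 3 2, r23 (-1) 2),
  (r23 4 1, r23 (-3) 1),
  (r23 4 3, r23 (-1) 3),
  (r23 9 1, r23 (-8) 1),
  (r23 9 8, r23 (-1) 8)}

/-- The `S`-unit equation `u + v = 1` with `u, v ∈ ℤ[1/S]ˣ` for `S = {2,3}` has
exactly `21` solutions `(u, v)`. -/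
theorem sUnitEquation_S_eq_two_three :
    {p : ℚ × ℚ | IsS23Unit p.1 ∧ IsS23Unit p.2 ∧ p.1 + p.2 = 1}.ncard = 21 := by
  have hset : {p : ℚ × ℚ | IsS23Unit p.1 ∧ IsS23Unit p.2 ∧ p.1 + p.2 = 1} = ↑L21 := by
    ext ⟨u, v⟩
    simp only [Set.mem_setOf_eq, L21, Finset.coe_insert, Set.mem_insert_iff, Finset.coe_singleton,
      Set.mem_singleton_iff, Prod.mk.injEq]
    constructor
    · rintro ⟨hu, hv, huv⟩
      obtain ⟨hden, hc⟩ := classify hu hv huv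
      rcases hc with ⟨h1,h2,h3⟩|⟨h1,h2,h3⟩|⟨h1,h2,h3⟩|⟨h1,h2,h3⟩|⟨h1,h2,h3⟩|⟨h1,h2,h3⟩|⟨h1,h2,h3⟩|⟨h1,h2,h3⟩|⟨h1,h2,h3⟩|⟨h1,h2,h3⟩|⟨h1,h2,h3⟩|⟨h1,h2,h3⟩|⟨h1,h2,h3⟩|⟨h1,h2,h3⟩|⟨h1,h2,h3⟩|⟨h1,h2,h3⟩|⟨h1,h2,h3⟩|⟨h1,h2,h3⟩|⟨h1,h2,h3⟩|⟨h1,h2,h3⟩|⟨h1,h2,h3⟩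
      · have hu' : u = r23 1 2 := Rat.ext h1 h2
        have hv' : v = r23 1 2 := Rat.ext h3 (hden.trans h2)
        left; exact ⟨hu', hv'⟩
      · have hu' : u = r23 1 3 := Rat.ext h1 h2
        have hv' : v = r23 2 3 := Rat.ext h3 (hden.trans h2)
        right; left; exact ⟨hu', hv'⟩
      · have hu' : u = r23 2 3 := Rat.ext h1 h2
        have hv' : v = r23 1 3 := Rat.ext h3 (hden.trans h2)
        right; right; left; exact ⟨hu', hv'⟩
      · have hu' : u = r23 1 4 := Rat.ext h1 h2
        have hv' : v = r23 3 4 := Rat.ext h3 (hden.trans h2)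
        right; right; right; left; exact ⟨hu', hv'⟩
      · have hu' : u = r23 3 4 := Rat.ext h1 h2
        have hv' : v = r23 1 4 := Rat.ext h3 (hden.trans h2)
        right; right; right; right; left; exact ⟨hu', hv'⟩
      · have hu' : u = r23 1 9 := Rat.ext h1 h2
        have hv' : v = r23 8 9 := Rat.ext h3 (hden.trans h2)
        right; right; right; right; right; left; exact ⟨hu', hv'⟩
      · have hu' : u = r23 8 9 := Rat.ext h1 h2
        have hv' : v = r23 1 9 := Rat.ext h3 (hden.trans h2)
        right; right; right; right; right; right; left; exact ⟨hu', hv'⟩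
      · have hu' : u = r23 (-1) 1 := Rat.ext h1 h2
        have hv' : v = r23 2 1 := Rat.ext h3 (hden.trans h2)
        right; right; right; right; right; right; right; left; exact ⟨hu', hv'⟩
      · have hu' : u = r23 (-2) 1 := Rat.ext h1 h2
        have hv' : v = r23 3 1 := Rat.ext h3 (hden.trans h2)
        right; right; right; right; right; right; right; right; left; exact ⟨hu', hv'⟩
      · have hu' : u = r23 (-1) 2 := Rat.ext h1 h2
        have hv' : v = r23 3 2 := Rat.ext h3 (hden.trans h2)
        right; right; right; right; right; right; right; right; right; left; exact ⟨hu', hv'⟩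
      · have hu' : u = r23 (-3) 1 := Rat.ext h1 h2
        have hv' : v = r23 4 1 := Rat.ext h3 (hden.trans h2)
        right; right; right; right; right; right; right; right; right; right; left; exact ⟨hu', hv'⟩
      · have hu' : u = r23 (-1) 3 := Rat.ext h1 h2
        have hv' : v = r23 4 3 := Rat.ext h3 (hden.trans h2)
        right; right; right; right; right; right; right; right; right; right; right; left; exact ⟨hu', hv'⟩
      · have hu' : u = r23 (-8) 1 := Rat.ext h1 h2
        have hv' : v = r23 9 1 := Rat.ext h3 (hden.trans h2)
        right; right; right; right; right; right; right; right; right; right; right; right; left; exact ⟨hu', hv'⟩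
      · have hu' : u = r23 (-1) 8 := Rat.ext h1 h2
        have hv' : v = r23 9 8 := Rat.ext h3 (hden.trans h2)
        right; right; right; right; right; right; right; right; right; right; right; right; right; left; exact ⟨hu', hv'⟩
      · have hu' : u = r23 2 1 := Rat.ext h1 h2
        have hv' : v = r23 (-1) 1 := Rat.ext h3 (hden.trans h2)
        right; right; right; right; right; right; right; right; right; right; right; right; right; right; left; exact ⟨hu', hv'⟩
      · have hu' : u = r23 3 1 := Rat.ext h1 h2
        have hv' : v = r23 (-2) 1 := Rat.ext h3 (hden.trans h2)
        right; right; right; right; right; right; right; right; right; right; right; right; right; right; right; left; exact ⟨hu', hv'⟩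
      · have hu' : u = r23 3 2 := Rat.ext h1 h2
        have hv' : v = r23 (-1) 2 := Rat.ext h3 (hden.trans h2)
        right; right; right; right; right; right; right; right; right; right; right; right; right; right; right; right; left; exact ⟨hu', hv'⟩
      · have hu' : u = r23 4 1 := Rat.ext h1 h2
        have hv' : v = r23 (-3) 1 := Rat.ext h3 (hden.trans h2)
        right; right; right; right; right; right; right; right; right; right; right; right; right; right; right; right; right; left; exact ⟨hu', hv'⟩
      · have hu' : u = r23 4 3 := Rat.ext h1 h2
        have hv' : v = r23 (-1) 3 := Rat.ext h3 (hden.trans h2)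
        right; right; right; right; right; right; right; right; right; right; right; right; right; right; right; right; right; right; left; exact ⟨hu', hv'⟩
      · have hu' : u = r23 9 1 := Rat.ext h1 h2
        have hv' : v = r23 (-8) 1 := Rat.ext h3 (hden.trans h2)
        right; right; right; right; right; right; right; right; right; right; right; right; right; right; right; right; right; right; right; left; exact ⟨hu', hv'⟩
      · have hu' : u = r23 9 8 := Rat.ext h1 h2
        have hv' : v = r23 (-1) 8 := Rat.ext h3 (hden.trans h2)
        right; right; right; right; right; right; right; right; right; right; right; right; right; right; right; right; right; right; right; right; exact ⟨hu', hv'⟩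
    · rintro (⟨h1,h2⟩|⟨h1,h2⟩|⟨h1,h2⟩|⟨h1,h2⟩|⟨h1,h2⟩|⟨h1,h2⟩|⟨h1,h2⟩|⟨h1,h2⟩|⟨h1,h2⟩|⟨h1,h2⟩|⟨h1,h2⟩|⟨h1,h2⟩|⟨h1,h2⟩|⟨h1,h2⟩|⟨h1,h2⟩|⟨h1,h2⟩|⟨h1,h2⟩|⟨h1,h2⟩|⟨h1,h2⟩|⟨h1,h2⟩|⟨h1,h2⟩)
      · subst h1 h2
        exact ⟨⟨-1, 0, Or.inl (by rw [r23_eq]; norm_num)⟩, ⟨-1, 0, Or.inl (by rw [r23_eq]; norm_num)⟩, by simp only [r23_eq]; norm_num⟩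
      · subst h1 h2
        exact ⟨⟨0, -1, Or.inl (by rw [r23_eq]; norm_num)⟩, ⟨1, -1, Or.inl (by rw [r23_eq]; norm_num)⟩, by simp only [r23_eq]; norm_num⟩
      · subst h1 h2
        exact ⟨⟨1, -1, Or.inl (by rw [r23_eq]; norm_num)⟩, ⟨0, -1, Or.inl (by rw [r23_eq]; norm_num)⟩, by simp only [r23_eq]; norm_num⟩
      · subst h1 h2
        exact ⟨⟨-2, 0, Or.inl (by rw [r23_eq]; norm_num)⟩, ⟨-2, 1, Or.inl (by rw [r23_eq]; norm_num)⟩, by simp only [r23_eq]; norm_num⟩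
      · subst h1 h2
        exact ⟨⟨-2, 1, Or.inl (by rw [r23_eq]; norm_num)⟩, ⟨-2, 0, Or.inl (by rw [r23_eq]; norm_num)⟩, by simp only [r23_eq]; norm_num⟩
      · subst h1 h2
        exact ⟨⟨0, -2, Or.inl (by rw [r23_eq]; norm_num)⟩, ⟨3, -2, Or.inl (by rw [r23_eq]; norm_num)⟩, by simp only [r23_eq]; norm_num⟩
      · subst h1 h2
        exact ⟨⟨3, -2, Or.inl (by rw [r23_eq]; norm_num)⟩, ⟨0, -2, Or.inl (by rw [r23_eq]; norm_num)⟩, by simp only [r23_eq]; norm_num⟩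
      · subst h1 h2
        exact ⟨⟨0, 0, Or.inr (by rw [r23_eq]; norm_num)⟩, ⟨1, 0, Or.inl (by rw [r23_eq]; norm_num)⟩, by simp only [r23_eq]; norm_num⟩
      · subst h1 h2
        exact ⟨⟨1, 0, Or.inr (by rw [r23_eq]; norm_num)⟩, ⟨0, 1, Or.inl (by rw [r23_eq]; norm_num)⟩, by simp only [r23_eq]; norm_num⟩
      · subst h1 h2
        exact ⟨⟨-1, 0, Or.inr (by rw [r23_eq]; norm_num)⟩, ⟨-1, 1, Or.inl (by rw [r23_eq]; norm_num)⟩, by simp only [r23_eq]; norm_num⟩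
      · subst h1 h2
        exact ⟨⟨0, 1, Or.inr (by rw [r23_eq]; norm_num)⟩, ⟨2, 0, Or.inl (by rw [r23_eq]; norm_num)⟩, by simp only [r23_eq]; norm_num⟩
      · subst h1 h2
        exact ⟨⟨0, -1, Or.inr (by rw [r23_eq]; norm_num)⟩, ⟨2, -1, Or.inl (by rw [r23_eq]; norm_num)⟩, by simp only [r23_eq]; norm_num⟩
      · subst h1 h2
        exact ⟨⟨3, 0, Or.inr (by rw [r23_eq]; norm_num)⟩, ⟨0, 2, Or.inl (by rw [r23_eq]; norm_num)⟩, by simp only [r23_eq]; norm_num⟩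
      · subst h1 h2
        exact ⟨⟨-3, 0, Or.inr (by rw [r23_eq]; norm_num)⟩, ⟨-3, 2, Or.inl (by rw [r23_eq]; norm_num)⟩, by simp only [r23_eq]; norm_num⟩
      · subst h1 h2
        exact ⟨⟨1, 0, Or.inl (by rw [r23_eq]; norm_num)⟩, ⟨0, 0, Or.inr (by rw [r23_eq]; norm_num)⟩, by simp only [r23_eq]; norm_num⟩
      · subst h1 h2
        exact ⟨⟨0, 1, Or.inl (by rw [r23_eq]; norm_num)⟩, ⟨1, 0, Or.inr (by rw [r23_eq]; norm_num)⟩, by simp only [r23_eq]; norm_num⟩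
      · subst h1 h2
        exact ⟨⟨-1, 1, Or.inl (by rw [r23_eq]; norm_num)⟩, ⟨-1, 0, Or.inr (by rw [r23_eq]; norm_num)⟩, by simp only [r23_eq]; norm_num⟩
      · subst h1 h2
        exact ⟨⟨2, 0, Or.inl (by rw [r23_eq]; norm_num)⟩, ⟨0, 1, Or.inr (by rw [r23_eq]; norm_num)⟩, by simp only [r23_eq]; norm_num⟩
      · subst h1 h2
        exact ⟨⟨2, -1, Or.inl (by rw [r23_eq]; norm_num)⟩, ⟨0, -1, Or.inr (by rw [r23_eq]; norm_num)⟩, by simp only [r23_eq]; norm_num⟩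
      · subst h1 h2
        exact ⟨⟨0, 2, Or.inl (by rw [r23_eq]; norm_num)⟩, ⟨3, 0, Or.inr (by rw [r23_eq]; norm_num)⟩, by simp only [r23_eq]; norm_num⟩
      · subst h1 h2
        exact ⟨⟨-3, 2, Or.inl (by rw [r23_eq]; norm_num)⟩, ⟨-3, 0, Or.inr (by rw [r23_eq]; norm_num)⟩, by simp only [r23_eq]; norm_num⟩
  rw [hset, Set.ncard_coe_finset]
  decide
end

section
/- The S-unit equation u + v = 1 with u, v ∈ ℤ[1/S]× for S = {2,5} has exactly 9 solutions (u,v). -/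
/-- `u` is a unit of `ℤ[1/S]` for `S = {2,5}`, i.e. a rational of the form `±2^a·5^b`. -/
def IsS25Unit (u : ℚ) : Prop := ∃ a b : ℤ, u = 2 ^ a * 5 ^ b ∨ u = -(2 ^ a * 5 ^ b)

namespace S25Aux

lemma L1 {e q : ℕ} (h : 2 ^ e = 5 ^ q + 1) : e = 1 ∧ q = 0 := by
  have he : e = 1 := by
    have h4 : (2:ZMod 4) ^ e = 5 ^ q + 1 := by exact_mod_cast congrArg (Nat.cast : ℕ → ZMod 4) h
    have h5 : (5:ZMod 4) ^ q = 1 := by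
      have : (5:ZMod 4) = 1 := by decide
      rw [this, one_pow]
    rw [h5] at h4
    match e with
    | 0 => rw [pow_zero] at h4; revert h4; decide
    | 1 => rfl
    | (n+2) => exfalso; rw [pow_add, show ((2:ZMod 4)^2 = 0) by decide, mul_zero] at h4; revert h4; decide
  subst he
  have h1 : 5 ^ q = 1 := by omega
  rcases q with _ | q
  · exact ⟨rfl, rfl⟩
  · exfalso; have : 5 ≤ 5 ^ (q+1) := Nat.le_self_pow (by omega) 5
    omega

lemma L2 {e q : ℕ} (h : 5 ^ q = 2 ^ e + 1) : q = 1 ∧ e = 2 := by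
  have hqodd : q % 2 = 1 := by
    by_contra hq
    have hq0 : q % 2 = 0 := by omega
    have h3 : (5:ZMod 3) ^ q = 2 ^ e + 1 := by exact_mod_cast congrArg (Nat.cast : ℕ → ZMod 3) h
    have h5 : (5:ZMod 3) ^ q = 1 := by
      obtain ⟨k, hk⟩ := Nat.even_iff.mpr hq0
      rw [hk, show k + k = 2*k by ring, pow_mul, show ((5:ZMod 3)^2 = 1) by decide, one_pow]
    rw [h5] at h3
    rcases Nat.even_or_odd e with he | he
    · obtain ⟨k, hk⟩ := he
      rw [hk, show k + k = 2*k by ring, pow_mul, show ((2:ZMod 3)^2 = 1) by decide, one_pow] at h3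
      revert h3; decide
    · obtain ⟨k, hk⟩ := he
      rw [hk, pow_add, pow_mul, show ((2:ZMod 3)^2 = 1) by decide, one_pow, one_mul] at h3
      revert h3; decide
  have h8 : (5:ZMod 8) ^ q = 2 ^ e + 1 := by exact_mod_cast congrArg (Nat.cast : ℕ → ZMod 8) h
  have h5 : (5:ZMod 8) ^ q = 5 := by
    obtain ⟨k, hk⟩ : ∃ k, q = 2*k+1 := ⟨q/2, by omega⟩
    rw [hk, pow_add, pow_mul, show ((5:ZMod 8)^2 = 1) by decide, one_pow, pow_one, one_mul]
  rw [h5] at h8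
  have he : e = 2 := by
    match e with
    | 0 => revert h8; decide
    | 1 => revert h8; decide
    | 2 => rfl
    | (n+3) => exfalso; rw [pow_add, show ((2:ZMod 8)^3 = 0) by decide, mul_zero] at h8; revert h8; decide
  subst he
  have h1 : 5 ^ q = 5 ^ 1 := by omega
  exact ⟨Nat.pow_right_injective (by norm_num) h1, rfl⟩

lemma two_le_pow {e : ℕ} (he : 1 ≤ e) : 2 ≤ 2^e := by
  calc 2 = 2^1 := rfl
  _ ≤ 2^e := Nat.pow_le_pow_right (by norm_num) he

lemma five_le_pow {f : ℕ} (hf : 1 ≤ f) : 5 ≤ 5^f := by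
  calc 5 = 5^1 := rfl
  _ ≤ 5^f := Nat.pow_le_pow_right (by norm_num) hf

lemma not_five_dvd_two_pow {e : ℕ} : ¬ (5:ℕ) ∣ 2^e := by
  intro h
  have := Nat.Prime.dvd_of_dvd_pow (p := 5) (by norm_num) h
  omega

lemma not_two_dvd_five_pow {f : ℕ} : ¬ (2:ℕ) ∣ 5^f := by
  intro h
  have := Nat.Prime.dvd_of_dvd_pow (p := 2) (by norm_num) h
  omega

lemma zpow_split (c : ℚ) (a : ℤ) (hc : c ≠ 0) :
    c ^ a = c ^ a.toNat / c ^ (-a).toNat ∧ (a.toNat = 0 ∨ (-a).toNat = 0) := by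
  rcases le_or_gt 0 a with h | h
  · have h1 : (-a).toNat = 0 := by omega
    have h2 : (a.toNat : ℤ) = a := Int.toNat_of_nonneg h
    refine ⟨?_, Or.inr h1⟩
    rw [h1, pow_zero, div_one, ← zpow_natCast, h2]
  · have h1 : a.toNat = 0 := by omega
    have h2 : ((-a).toNat : ℤ) = -a := Int.toNat_of_nonneg (by omega)
    refine ⟨?_, Or.inl h1⟩
    rw [h1, pow_zero, one_div, ← zpow_natCast, h2, zpow_neg, inv_inv]

lemma coprime_nd {p q e f : ℕ} (hpe : p = 0 ∨ e = 0) (hqf : q = 0 ∨ f = 0) :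
    Nat.Coprime (2^p*5^q) (2^e*5^f) := by
  have h25 : Nat.Coprime 2 5 := by decide
  apply Nat.Coprime.mul
  · apply Nat.Coprime.mul_right
    · rcases hpe with h | h <;> simp [h]
    · exact Nat.Coprime.pow _ _ h25
  · apply Nat.Coprime.mul_right
    · exact Nat.Coprime.pow _ _ h25.symm
    · rcases hqf with h | h <;> simp [h]

lemma unit_repr {u : ℚ} (h : IsS25Unit u) :
    ∃ (p q e f : ℕ) (σ : ℤ), (σ = 1 ∨ σ = -1) ∧
      u.num = σ * (2^p * 5^q) ∧ (u.den : ℤ) = 2^e * 5^f ∧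
      (p = 0 ∨ e = 0) ∧ (q = 0 ∨ f = 0) := by
  obtain ⟨a, b, hab⟩ := h
  obtain ⟨h2, hpe⟩ := zpow_split 2 a (by norm_num)
  obtain ⟨h5, hqf⟩ := zpow_split 5 b (by norm_num)
  set p := a.toNat; set e := (-a).toNat; set q := b.toNat; set f := (-b).toNat
  have hcop : Nat.Coprime (2^p*5^q) (2^e*5^f) := coprime_nd hpe hqf
  have hb0 : (0:ℤ) < 2^e*5^f := by positivity
  obtain ⟨σ, hσ, hu'⟩ : ∃ σ : ℤ, (σ = 1 ∨ σ = -1) ∧ u = (σ:ℚ) * ((2:ℚ)^a * (5:ℚ)^b) := by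
    rcases hab with hu | hu
    · exact ⟨1, Or.inl rfl, by rw [hu]; push_cast; ring⟩
    · exact ⟨-1, Or.inr rfl, by rw [hu]; push_cast; ring⟩
  have hne2 : (2:ℚ)^e ≠ 0 := by positivity
  have hne5 : (5:ℚ)^f ≠ 0 := by positivity
  have hval : u = ((σ * (2^p*5^q) : ℤ) : ℚ) / ((2^e*5^f : ℤ) : ℚ) := by
    rw [hu', h2, h5]; push_cast; field_simp
  have hca : Nat.Coprime (σ * (2^p*5^q) : ℤ).natAbs ((2^e*5^f : ℤ)).natAbs := by
    rcases hσ with h | h <;> subst h <;>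
      simpa [Int.natAbs_mul, Int.natAbs_pow] using hcop
  exact ⟨p, q, e, f, σ, hσ,
    by rw [hval]; exact Rat.num_div_eq_of_coprime hb0 hca,
    by rw [hval]; exact Rat.den_div_eq_of_coprime hb0 hca, hpe, hqf⟩

lemma sum_eq_one_den {u v : ℚ} (h : u + v = 1) :
    v.den = u.den ∧ u.num + v.num = (u.den : ℤ) := by
  have hdu : ((u.den:ℚ)) ≠ 0 := by exact_mod_cast u.den_ne_zero
  have hdv : ((v.den:ℚ)) ≠ 0 := by exact_mod_cast v.den_ne_zero
  have hq : (u.num:ℚ) * v.den + v.num * u.den = u.den * v.den := by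
    rw [← Rat.num_div_den u, ← Rat.num_div_den v] at h
    field_simp at h
    linarith [h]
  have hz : u.num * (v.den:ℤ) + v.num * (u.den:ℤ) = (u.den:ℤ) * v.den := by
    exact_mod_cast hq
  have d1 : u.den ∣ v.den := by
    have hd : (u.den:ℤ) ∣ u.num * v.den := ⟨(v.den:ℤ) - v.num, by linarith [hz]⟩
    have hd' : u.den ∣ u.num.natAbs * v.den := by
      have := Int.natAbs_dvd_natAbs.mpr hd
      simpa [Int.natAbs_mul] using this
    exact (Nat.Coprime.dvd_of_dvd_mul_left u.reduced.symm hd')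
  have d2 : v.den ∣ u.den := by
    have hd : (v.den:ℤ) ∣ v.num * u.den := ⟨(u.den:ℤ) - u.num, by linarith [hz]⟩
    have hd' : v.den ∣ v.num.natAbs * u.den := by
      have := Int.natAbs_dvd_natAbs.mpr hd
      simpa [Int.natAbs_mul] using this
    exact (Nat.Coprime.dvd_of_dvd_mul_left v.reduced.symm hd')
  have hdd : v.den = u.den := Nat.dvd_antisymm d2 d1
  refine ⟨hdd, ?_⟩
  rw [hdd] at hz
  have h0 : (u.den:ℤ) ≠ 0 := by exact_mod_cast u.den_ne_zero
  exact mul_right_cancel₀ h0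
    (show (u.num + v.num) * (u.den:ℤ) = (u.den:ℤ) * (u.den:ℤ) by linear_combination hz)

lemma rat_eval {u : ℚ} {n d : ℤ} (hn : u.num = n) (hd : (u.den:ℤ) = d) : u = (n:ℚ)/(d:ℚ) := by
  rw [← Rat.num_div_den u, hn]
  congr 1
  exact_mod_cast hd

lemma constraint {r s e f : ℕ} (h : Nat.Coprime (2^r*5^s) (2^e*5^f)) :
    (r = 0 ∨ e = 0) ∧ (s = 0 ∨ f = 0) := by
  rw [Nat.Coprime] at h
  constructor
  · by_contra hc
    push_neg at hc
    have d1 : 2 ∣ 2^r*5^s := dvd_mul_of_dvd_left (dvd_pow_self 2 hc.1) _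
    have d2 : 2 ∣ 2^e*5^f := dvd_mul_of_dvd_left (dvd_pow_self 2 hc.2) _
    have := Nat.dvd_gcd d1 d2
    omega
  · by_contra hc
    push_neg at hc
    have d1 : 5 ∣ 2^r*5^s := dvd_mul_of_dvd_right (dvd_pow_self 5 hc.1) _
    have d2 : 5 ∣ 2^e*5^f := dvd_mul_of_dvd_right (dvd_pow_self 5 hc.2) _
    have := Nat.dvd_gcd d1 d2
    omega

lemma main_classify {u v : ℚ} (hu : IsS25Unit u) (hv : IsS25Unit v) (h : u + v = 1) :
    (u, v) ∈ ({((1:ℚ)/2, (1:ℚ)/2), (2, -1), (-1, 2), (5, -4), (-4, 5),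
      (1/5, 4/5), (4/5, 1/5), (5/4, -1/4), (-1/4, 5/4)} : Set (ℚ × ℚ)) := by
  obtain ⟨p, q, e, f, σ, hσ, hun, hud, hpe, hqf⟩ := unit_repr hu
  obtain ⟨r, s, e', f', τ, hτ, hvn, _, _, _⟩ := unit_repr hv
  obtain ⟨hdd, hsum⟩ := sum_eq_one_den h
  have hvd : (v.den : ℤ) = 2^e * 5^f := by rw [hdd]; exact hud
  have E : σ * (2^p*5^q) + τ * (2^r*5^s) = 2^e*5^f := by
    rw [← hun, ← hvn, ← hud]; exact hsum
  have hna : v.num.natAbs = 2^r*5^s := by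
    rcases hτ with h' | h' <;> subst h' <;>
      simp [hvn, Int.natAbs_mul, Int.natAbs_pow]
  have hdenn : v.den = 2^e*5^f := by exact_mod_cast hvd
  have hcopv : Nat.Coprime (2^r*5^s) (2^e*5^f) := by
    rw [← hna, ← hdenn]; exact v.reduced
  obtain ⟨hre, hsf⟩ := constraint hcopv
  clear hna hdenn hcopv hsum hdd hu hv h
  rcases Nat.eq_zero_or_pos e with he | he
  · subst he
    rcases Nat.eq_zero_or_pos f with hf | hf
    · -- CASE 4 : e = 0, f = 0
      subst hf
      have hpr : p = 0 ∨ r = 0 := by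
        by_contra hc
        push_neg at hc
        obtain ⟨p', rfl⟩ : ∃ p', p = p'+1 := ⟨p-1, by omega⟩
        obtain ⟨r', rfl⟩ : ∃ r', r = r'+1 := ⟨r-1, by omega⟩
        have : (2:ℤ) ∣ 1 := ⟨σ*(2^p'*5^q) + τ*(2^r'*5^s), by first | linear_combination E | first | linear_combination E | linear_combination -E⟩
        norm_num at this
      have hqs : q = 0 ∨ s = 0 := by
        by_contra hc
        push_neg at hc
        obtain ⟨q', rfl⟩ : ∃ q', q = q'+1 := ⟨q-1, by omega⟩
        obtain ⟨s', rfl⟩ : ∃ s', s = s'+1 := ⟨s-1, by omega⟩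
        have : (5:ℤ) ∣ 1 := ⟨σ*(2^p*5^q') + τ*(2^r*5^s'), by first | linear_combination E | first | linear_combination E | linear_combination -E⟩
        norm_num at this
      rcases hpr with hp | hr
      · subst hp
        rcases hqs with hq | hs
        · -- p = 0, q = 0 : σ + τ*(2^r*5^s) = 1
          subst hq
          rcases hσ with rfl | rfl <;> rcases hτ with rfl | rfl
          · have EZ : (2:ℤ)^r*5^s = 0 := by first | linear_combination E | linear_combination -E
            have : (0:ℤ) < 2^r*5^s := by positivity
            linarith
          · have EZ : (2:ℤ)^r*5^s = 0 := by first | linear_combination E | linear_combination -E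
            have : (0:ℤ) < 2^r*5^s := by positivity
            linarith
          · -- -1 + (2^r*5^s) = 1
            have EZ : (2:ℤ)^r*5^s = 2 := by first | linear_combination E | linear_combination -E
            rcases Nat.eq_zero_or_pos s with hs | hs
            · subst hs
              have EZ2 : (2:ℤ)^r = 2^1 := by linear_combination EZ
              have EN : (2:ℕ)^r = 2^1 := by exact_mod_cast EZ2
              have hr1 : r = 1 := Nat.pow_right_injective (le_refl 2) EN
              subst hr1
              have hu2 := rat_eval hun hud
              have hv2 := rat_eval hvn hvd
              norm_num at hu2 hv2
              simp only [Set.mem_insert_iff, Set.mem_singleton_iff, Prod.mk.injEq]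
              norm_num [hu2, hv2]
            · obtain ⟨s', rfl⟩ : ∃ s', s = s'+1 := ⟨s-1, by omega⟩
              have : (5:ℤ) ∣ 2 := ⟨2^r*5^s', by first | linear_combination EZ | linear_combination -EZ⟩
              norm_num at this
          · have EZ : (2:ℤ)^r*5^s = -2 := by first | linear_combination E | linear_combination -E
            have : (0:ℤ) < 2^r*5^s := by positivity
            linarith
        · -- p = 0, s = 0 : σ*5^q + τ*2^r = 1
          subst hs
          rcases hσ with rfl | rfl <;> rcases hτ with rfl | rfl
          · have EZ : (5:ℤ)^q + 2^r = 1 := by first | linear_combination E | linear_combination -E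
            have EN : (5:ℕ)^q + 2^r = 1 := by exact_mod_cast EZ
            have h1 : 1 ≤ 5^q := Nat.one_le_pow _ _ (by norm_num)
            have h2 : 1 ≤ 2^r := Nat.one_le_pow _ _ (by norm_num)
            omega
          · have EZ : (5:ℤ)^q = 2^r + 1 := by first | linear_combination E | linear_combination -E
            have EN : (5:ℕ)^q = 2^r + 1 := by exact_mod_cast EZ
            obtain ⟨rfl, rfl⟩ := L2 EN
            have hu2 := rat_eval hun hud
            have hv2 := rat_eval hvn hvd
            norm_num at hu2 hv2
            simp only [Set.mem_insert_iff, Set.mem_singleton_iff, Prod.mk.injEq]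
            norm_num [hu2, hv2]
          · have EZ : (2:ℤ)^r = 5^q + 1 := by first | linear_combination E | linear_combination -E
            have EN : (2:ℕ)^r = 5^q + 1 := by exact_mod_cast EZ
            obtain ⟨rfl, rfl⟩ := L1 EN
            have hu2 := rat_eval hun hud
            have hv2 := rat_eval hvn hvd
            norm_num at hu2 hv2
            simp only [Set.mem_insert_iff, Set.mem_singleton_iff, Prod.mk.injEq]
            norm_num [hu2, hv2]
          · have EZ : (5:ℤ)^q + 2^r = -1 := by first | linear_combination E | linear_combination -E
            have h1 : (0:ℤ) < 5^q := by positivity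
            have h2 : (0:ℤ) < 2^r := by positivity
            linarith
      · subst hr
        rcases hqs with hq | hs
        · -- r = 0, q = 0 : σ*2^p + τ*5^s = 1
          subst hq
          rcases hσ with rfl | rfl <;> rcases hτ with rfl | rfl
          · have EZ : (2:ℤ)^p + 5^s = 1 := by first | linear_combination E | linear_combination -E
            have EN : (2:ℕ)^p + 5^s = 1 := by exact_mod_cast EZ
            have h1 : 1 ≤ 2^p := Nat.one_le_pow _ _ (by norm_num)
            have h2 : 1 ≤ 5^s := Nat.one_le_pow _ _ (by norm_num)
            omega
          · have EZ : (2:ℤ)^p = 5^s + 1 := by first | linear_combination E | linear_combination -E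
            have EN : (2:ℕ)^p = 5^s + 1 := by exact_mod_cast EZ
            obtain ⟨rfl, rfl⟩ := L1 EN
            have hu2 := rat_eval hun hud
            have hv2 := rat_eval hvn hvd
            norm_num at hu2 hv2
            simp only [Set.mem_insert_iff, Set.mem_singleton_iff, Prod.mk.injEq]
            norm_num [hu2, hv2]
          · have EZ : (5:ℤ)^s = 2^p + 1 := by first | linear_combination E | linear_combination -E
            have EN : (5:ℕ)^s = 2^p + 1 := by exact_mod_cast EZ
            obtain ⟨rfl, rfl⟩ := L2 EN
            have hu2 := rat_eval hun hud
            have hv2 := rat_eval hvn hvd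
            norm_num at hu2 hv2
            simp only [Set.mem_insert_iff, Set.mem_singleton_iff, Prod.mk.injEq]
            norm_num [hu2, hv2]
          · have EZ : (2:ℤ)^p + 5^s = -1 := by first | linear_combination E | linear_combination -E
            have h1 : (0:ℤ) < 2^p := by positivity
            have h2 : (0:ℤ) < 5^s := by positivity
            linarith
        · -- r = 0, s = 0 : σ*(2^p*5^q) + τ = 1
          subst hs
          rcases hσ with rfl | rfl <;> rcases hτ with rfl | rfl
          · have EZ : (2:ℤ)^p*5^q = 0 := by first | linear_combination E | linear_combination -E
            have : (0:ℤ) < 2^p*5^q := by positivity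
            linarith
          · have EZ : (2:ℤ)^p*5^q = 2 := by first | linear_combination E | linear_combination -E
            rcases Nat.eq_zero_or_pos q with hq | hq
            · subst hq
              have EZ2 : (2:ℤ)^p = 2^1 := by linear_combination EZ
              have EN : (2:ℕ)^p = 2^1 := by exact_mod_cast EZ2
              have hp1 : p = 1 := Nat.pow_right_injective (le_refl 2) EN
              subst hp1
              have hu2 := rat_eval hun hud
              have hv2 := rat_eval hvn hvd
              norm_num at hu2 hv2
              simp only [Set.mem_insert_iff, Set.mem_singleton_iff, Prod.mk.injEq]
              norm_num [hu2, hv2]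
            · obtain ⟨q', rfl⟩ : ∃ q', q = q'+1 := ⟨q-1, by omega⟩
              have : (5:ℤ) ∣ 2 := ⟨2^p*5^q', by first | linear_combination EZ | linear_combination -EZ⟩
              norm_num at this
          · have EZ : (2:ℤ)^p*5^q = 0 := by first | linear_combination E | linear_combination -E
            have : (0:ℤ) < 2^p*5^q := by positivity
            linarith
          · have EZ : (2:ℤ)^p*5^q = -2 := by first | linear_combination E | linear_combination -E
            have : (0:ℤ) < 2^p*5^q := by positivity
            linarith
    · -- CASE 3 : e = 0, f ≥ 1
      have hq : q = 0 := hqf.resolve_right (by omega)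
      have hs : s = 0 := hsf.resolve_right (by omega)
      subst hq; subst hs
      rcases hσ with rfl | rfl <;> rcases hτ with rfl | rfl
      · have EZ : (5:ℤ)^f = 2^p + 2^r := by first | linear_combination E | linear_combination -E
        have EN : (5:ℕ)^f = 2^p + 2^r := by exact_mod_cast EZ
        rcases Nat.eq_zero_or_pos p with hp | hp
        · subst hp
          obtain ⟨rfl, rfl⟩ := L2 (by simp only [pow_zero] at EN; omega : (5:ℕ)^f = 2^r + 1)
          have hu2 := rat_eval hun hud
          have hv2 := rat_eval hvn hvd
          norm_num at hu2 hv2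
          simp only [Set.mem_insert_iff, Set.mem_singleton_iff, Prod.mk.injEq]
          norm_num [hu2, hv2]
        · rcases Nat.eq_zero_or_pos r with hr | hr
          · subst hr
            obtain ⟨rfl, rfl⟩ := L2 (by simp only [pow_zero] at EN; omega : (5:ℕ)^f = 2^p + 1)
            have hu2 := rat_eval hun hud
            have hv2 := rat_eval hvn hvd
            norm_num at hu2 hv2
            simp only [Set.mem_insert_iff, Set.mem_singleton_iff, Prod.mk.injEq]
            norm_num [hu2, hv2]
          · obtain ⟨p', rfl⟩ : ∃ p', p = p'+1 := ⟨p-1, by omega⟩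
            obtain ⟨r', rfl⟩ : ∃ r', r = r'+1 := ⟨r-1, by omega⟩
            have hdv : (2:ℤ) ∣ 5^f := ⟨2^p' + 2^r', by first | linear_combination EZ | linear_combination -EZ⟩
            exact absurd (by exact_mod_cast hdv) (not_two_dvd_five_pow (f := f))
      · have EZ : (2:ℤ)^p = 5^f + 2^r := by first | linear_combination E | linear_combination -E
        have EN : (2:ℕ)^p = 5^f + 2^r := by exact_mod_cast EZ
        rcases Nat.eq_zero_or_pos r with hr | hr
        · subst hr
          obtain ⟨rfl, rfl⟩ := L1 (by simp only [pow_zero] at EN; omega : (2:ℕ)^p = 5^f + 1)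
          omega
        · rcases Nat.eq_zero_or_pos p with hp | hp
          · subst hp
            have h1 : 5 ≤ 5^f := five_le_pow hf
            have h2 : 2 ≤ 2^r := two_le_pow hr
            simp at EN
            omega
          · obtain ⟨p', rfl⟩ : ∃ p', p = p'+1 := ⟨p-1, by omega⟩
            obtain ⟨r', rfl⟩ : ∃ r', r = r'+1 := ⟨r-1, by omega⟩
            have hdv : (2:ℤ) ∣ 5^f := ⟨2^p' - 2^r', by first | linear_combination EZ | linear_combination -EZ⟩
            exact absurd (by exact_mod_cast hdv) (not_two_dvd_five_pow (f := f))
      · have EZ : (2:ℤ)^r = 5^f + 2^p := by first | linear_combination E | linear_combination -E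
        have EN : (2:ℕ)^r = 5^f + 2^p := by exact_mod_cast EZ
        rcases Nat.eq_zero_or_pos p with hp | hp
        · subst hp
          obtain ⟨rfl, rfl⟩ := L1 (by simp only [pow_zero] at EN; omega : (2:ℕ)^r = 5^f + 1)
          omega
        · rcases Nat.eq_zero_or_pos r with hr | hr
          · subst hr
            have h1 : 5 ≤ 5^f := five_le_pow hf
            have h2 : 2 ≤ 2^p := two_le_pow hp
            simp at EN
            omega
          · obtain ⟨p', rfl⟩ : ∃ p', p = p'+1 := ⟨p-1, by omega⟩
            obtain ⟨r', rfl⟩ : ∃ r', r = r'+1 := ⟨r-1, by omega⟩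
            have hdv : (2:ℤ) ∣ 5^f := ⟨2^r' - 2^p', by first | linear_combination EZ | linear_combination -EZ⟩
            exact absurd (by exact_mod_cast hdv) (not_two_dvd_five_pow (f := f))
      · have EZ : (2:ℤ)^p + 2^r + 5^f = 0 := by first | linear_combination E | linear_combination -E
        have h1 : (0:ℤ) < 2^p := by positivity
        have h2 : (0:ℤ) < 2^r := by positivity
        have h3 : (0:ℤ) < 5^f := by positivity
        linarith
  · -- e ≥ 1
    have hp : p = 0 := hpe.resolve_right (by omega)
    have hr : r = 0 := hre.resolve_right (by omega)
    subst hp; subst hr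
    rcases Nat.eq_zero_or_pos f with hf | hf
    · -- CASE 2 : e ≥ 1, f = 0
      subst hf
      rcases hσ with rfl | rfl <;> rcases hτ with rfl | rfl
      · have EZ : (2:ℤ)^e = 5^q + 5^s := by first | linear_combination E | linear_combination -E
        have EN : (2:ℕ)^e = 5^q + 5^s := by exact_mod_cast EZ
        rcases Nat.eq_zero_or_pos q with hq | hq
        · subst hq
          obtain ⟨rfl, rfl⟩ := L1 (by simp only [pow_zero] at EN; omega : (2:ℕ)^e = 5^s + 1)
          have hu2 := rat_eval hun hud
          have hv2 := rat_eval hvn hvd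
          norm_num at hu2 hv2
          simp only [Set.mem_insert_iff, Set.mem_singleton_iff, Prod.mk.injEq]
          norm_num [hu2, hv2]
        · rcases Nat.eq_zero_or_pos s with hs | hs
          · subst hs
            obtain ⟨rfl, rfl⟩ := L1 (by simp only [pow_zero] at EN; omega : (2:ℕ)^e = 5^q + 1)
            omega
          · obtain ⟨q', rfl⟩ : ∃ q', q = q'+1 := ⟨q-1, by omega⟩
            obtain ⟨s', rfl⟩ : ∃ s', s = s'+1 := ⟨s-1, by omega⟩
            have hdv : (5:ℤ) ∣ 2^e := ⟨5^q' + 5^s', by first | linear_combination EZ | linear_combination -EZ⟩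
            exact absurd (by exact_mod_cast hdv) (not_five_dvd_two_pow (e := e))
      · have EZ : (5:ℤ)^q = 2^e + 5^s := by first | linear_combination E | linear_combination -E
        have EN : (5:ℕ)^q = 2^e + 5^s := by exact_mod_cast EZ
        rcases Nat.eq_zero_or_pos s with hs | hs
        · subst hs
          obtain ⟨rfl, rfl⟩ := L2 (by simp only [pow_zero] at EN; omega : (5:ℕ)^q = 2^e + 1)
          have hu2 := rat_eval hun hud
          have hv2 := rat_eval hvn hvd
          norm_num at hu2 hv2
          simp only [Set.mem_insert_iff, Set.mem_singleton_iff, Prod.mk.injEq]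
          norm_num [hu2, hv2]
        · rcases Nat.eq_zero_or_pos q with hq | hq
          · subst hq
            have h1 : 2 ≤ 2^e := two_le_pow he
            have h2 : 5 ≤ 5^s := five_le_pow hs
            simp at EN
            omega
          · obtain ⟨q', rfl⟩ : ∃ q', q = q'+1 := ⟨q-1, by omega⟩
            obtain ⟨s', rfl⟩ : ∃ s', s = s'+1 := ⟨s-1, by omega⟩
            have hdv : (5:ℤ) ∣ 2^e := ⟨5^q' - 5^s', by first | linear_combination EZ | linear_combination -EZ⟩
            exact absurd (by exact_mod_cast hdv) (not_five_dvd_two_pow (e := e))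
      · have EZ : (5:ℤ)^s = 2^e + 5^q := by first | linear_combination E | linear_combination -E
        have EN : (5:ℕ)^s = 2^e + 5^q := by exact_mod_cast EZ
        rcases Nat.eq_zero_or_pos q with hq | hq
        · subst hq
          obtain ⟨rfl, rfl⟩ := L2 (by simp only [pow_zero] at EN; omega : (5:ℕ)^s = 2^e + 1)
          have hu2 := rat_eval hun hud
          have hv2 := rat_eval hvn hvd
          norm_num at hu2 hv2
          simp only [Set.mem_insert_iff, Set.mem_singleton_iff, Prod.mk.injEq]
          norm_num [hu2, hv2]
        · rcases Nat.eq_zero_or_pos s with hs | hs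
          · subst hs
            have h1 : 2 ≤ 2^e := two_le_pow he
            have h2 : 5 ≤ 5^q := five_le_pow hq
            simp at EN
            omega
          · obtain ⟨q', rfl⟩ : ∃ q', q = q'+1 := ⟨q-1, by omega⟩
            obtain ⟨s', rfl⟩ : ∃ s', s = s'+1 := ⟨s-1, by omega⟩
            have hdv : (5:ℤ) ∣ 2^e := ⟨5^s' - 5^q', by first | linear_combination EZ | linear_combination -EZ⟩
            exact absurd (by exact_mod_cast hdv) (not_five_dvd_two_pow (e := e))
      · have EZ : (5:ℤ)^q + 5^s + 2^e = 0 := by first | linear_combination E | linear_combination -E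
        have h1 : (0:ℤ) < 5^q := by positivity
        have h2 : (0:ℤ) < 5^s := by positivity
        have h3 : (0:ℤ) < 2^e := by positivity
        linarith
    · -- CASE 1 : e ≥ 1, f ≥ 1
      have hq : q = 0 := hqf.resolve_right (by omega)
      have hs : s = 0 := hsf.resolve_right (by omega)
      subst hq; subst hs
      rcases hσ with rfl | rfl <;> rcases hτ with rfl | rfl
      · have EZ : (2:ℤ)^e*5^f = 2 := by first | linear_combination E | linear_combination -E
        have EN : (2:ℕ)^e*5^f = 2 := by exact_mod_cast EZ
        have h1 : 2 ≤ 2^e := two_le_pow he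
        have h2 : 5 ≤ 5^f := five_le_pow hf
        have := Nat.mul_le_mul h1 h2
        omega
      · have EZ : (2:ℤ)^e*5^f = 0 := by first | linear_combination E | linear_combination -E
        have : (0:ℤ) < 2^e*5^f := by positivity
        linarith
      · have EZ : (2:ℤ)^e*5^f = 0 := by first | linear_combination E | linear_combination -E
        have : (0:ℤ) < 2^e*5^f := by positivity
        linarith
      · have EZ : (2:ℤ)^e*5^f = -2 := by first | linear_combination E | linear_combination -E
        have : (0:ℤ) < 2^e*5^f := by positivity
        linarith

lemma unit_vals :
    IsS25Unit (1/2) ∧ IsS25Unit 2 ∧ IsS25Unit (-1) ∧ IsS25Unit 5 ∧ IsS25Unit (-4) ∧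
    IsS25Unit (1/5) ∧ IsS25Unit (4/5) ∧ IsS25Unit (5/4) ∧ IsS25Unit (-1/4) := by
  refine ⟨⟨-1, 0, Or.inl ?_⟩, ⟨1, 0, Or.inl ?_⟩, ⟨0, 0, Or.inr ?_⟩, ⟨0, 1, Or.inl ?_⟩,
    ⟨2, 0, Or.inr ?_⟩, ⟨0, -1, Or.inl ?_⟩, ⟨2, -1, Or.inl ?_⟩, ⟨-2, 1, Or.inl ?_⟩,
    ⟨-2, 0, Or.inr ?_⟩⟩ <;> norm_num

end S25Aux

open S25Aux in
/-- The `S`-unit equation `u + v = 1` with `u, v ∈ ℤ[1/S]ˣ` for `S = {2,5}` has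
exactly `9` solutions `(u, v)`. -/
theorem sUnitEquation_S_eq_two_five :
    {p : ℚ × ℚ | IsS25Unit p.1 ∧ IsS25Unit p.2 ∧ p.1 + p.2 = 1}.ncard = 9 := by
  obtain ⟨w1, w2, w3, w4, w5, w6, w7, w8, w9⟩ := unit_vals
  have hset : {p : ℚ × ℚ | IsS25Unit p.1 ∧ IsS25Unit p.2 ∧ p.1 + p.2 = 1} =
      ({((1:ℚ)/2, (1:ℚ)/2), (2, -1), (-1, 2), (5, -4), (-4, 5),
        (1/5, 4/5), (4/5, 1/5), (5/4, -1/4), (-1/4, 5/4)} : Set (ℚ × ℚ)) := by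
    ext ⟨u, v⟩
    simp only [Set.mem_setOf_eq]
    constructor
    · rintro ⟨hu, hv, h⟩
      exact main_classify hu hv h
    · intro hm
      simp only [Set.mem_insert_iff, Set.mem_singleton_iff, Prod.mk.injEq] at hm
      rcases hm with ⟨rfl, rfl⟩ | ⟨rfl, rfl⟩ | ⟨rfl, rfl⟩ | ⟨rfl, rfl⟩ | ⟨rfl, rfl⟩ |
        ⟨rfl, rfl⟩ | ⟨rfl, rfl⟩ | ⟨rfl, rfl⟩ | ⟨rfl, rfl⟩
      · exact ⟨w1, w1, by norm_num⟩
      · exact ⟨w2, w3, by norm_num⟩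
      · exact ⟨w3, w2, by norm_num⟩
      · exact ⟨w4, w5, by norm_num⟩
      · exact ⟨w5, w4, by norm_num⟩
      · exact ⟨w6, w7, by norm_num⟩
      · exact ⟨w7, w6, by norm_num⟩
      · exact ⟨w8, w9, by norm_num⟩
      · exact ⟨w9, w8, by norm_num⟩
  rw [hset]
  rw [Set.ncard_insert_of_notMem (by norm_num [Prod.ext_iff])]
  rw [Set.ncard_insert_of_notMem (by norm_num [Prod.ext_iff])]
  rw [Set.ncard_insert_of_notMem (by norm_num [Prod.ext_iff])]
  rw [Set.ncard_insert_of_notMem (by norm_num [Prod.ext_iff])]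
  rw [Set.ncard_insert_of_notMem (by norm_num [Prod.ext_iff])]
  rw [Set.ncard_insert_of_notMem (by norm_num [Prod.ext_iff])]
  rw [Set.ncard_insert_of_notMem (by norm_num [Prod.ext_iff])]
  rw [Set.ncard_insert_of_notMem (by norm_num [Prod.ext_iff])]
  rw [Set.ncard_singleton]
end
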